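/- Consequently, if U is an undirected graph on more than 2 vertices with a Hamiltonian cycle, and G is its bidirected version, then the cycle pattern ψ on G defined by ψ(C) = + if C is a Hamiltonian directed cycle and ψ(C) = − otherwise is not realizable: there is no weight function w : E(G) → ℝ with sign(Σ_{e∈C} w(e)) = ψ(C) for all directed simple cycles C. -/

import Mathlib

/-- A directed simple cycle in a digraph given by source and target maps. -/
def IsCycle {V E : Type*} (src tgt : E → V) (es : List E) : Prop :=
  es ≠ [] ∧ es.Chain' (fun e f => tgt e = src f) ∧
    (∀ h : es ≠ [], tgt (es.getLast h) = src (es.head h)) ∧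
    (es.map src).Nodup

section aux
variable {V E : Type*} {src tgt : E → V}

lemma map_tgt_eq {es : List E} (hch : es.Chain' (fun e f => tgt e = src f)) (h : es ≠ []) :
    es.map tgt = (es.map src).tail ++ [tgt (es.getLast h)] := by
  induction es with
  | nil => simp at h
  | cons a l ih =>
    cases l with
    | nil => simp
    | cons b l' =>
      rw [List.Chain', List.isChain_cons_cons] at hch
      have h2 : (b :: l') ≠ [] := by simp
      have := ih hch.2 h2
      simp only [List.map_cons, List.tail_cons] at this ⊢
      rw [List.getLast_cons h2, this, hch.1]
      simp

lemma map_tgt_perm {es : List E} (hc : IsCycle src tgt es) :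
    (es.map tgt).Perm (es.map src) := by
  obtain ⟨hne, hch, hlast, hnd⟩ := hc
  rw [map_tgt_eq hch hne, hlast hne]
  have hm : es.map src ≠ [] := by simpa using hne
  have : es.map src = src (es.head hne) :: (es.map src).tail := by
    conv_lhs => rw [← List.cons_head_tail hm]
    rw [List.head_map]
  rw [this]
  exact List.perm_append_singleton _ _

lemma rev_cycle (rev : E → E) (hs : ∀ e, src (rev e) = tgt e) (ht : ∀ e, tgt (rev e) = src e)
    {es : List E} (hc : IsCycle src tgt es) :
    IsCycle src tgt (es.reverse.map rev) := by
  obtain ⟨hne, hch, hlast, hnd⟩ := hc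
  have hrne : es.reverse.map rev ≠ [] := by simpa using hne
  refine ⟨hrne, ?_, ?_, ?_⟩
  · rw [List.Chain', List.isChain_map, List.isChain_reverse]
    refine hch.imp ?_
    intro a b hab
    simp [flip, hs, ht, hab]
  · intro h
    have hre : es.reverse ≠ [] := by simpa using hne
    rw [List.getLast_map, List.head_map, List.getLast_reverse, List.head_reverse, ht, hs]
    exact (hlast hne).symm
  · have : (es.reverse.map rev).map src = (es.map tgt).reverse := by
      rw [List.map_map, ← List.map_reverse]
      congr 1
      funext e
      exact hs e
    rw [this, List.nodup_reverse]
    exact (map_tgt_perm ⟨hne, hch, hlast, hnd⟩).nodup_iff.mpr hnd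

lemma no_loop {es : List E} (hc : IsCycle src tgt es) (hlen : 2 ≤ es.length)
    {e : E} (he : e ∈ es) : src e ≠ tgt e := by
  obtain ⟨hne, hch, hlast, hnd⟩ := hc
  obtain ⟨i, hi, rfl⟩ := List.getElem_of_mem he
  rw [List.Chain', List.isChain_iff_getElem] at hch
  have hndlen : ∀ {i j : ℕ} (hi : i < es.length) (hj : j < es.length),
      src es[i] = src es[j] → i = j := by
    intro i j hi hj hij
    have : (es.map src)[i]'(by simpa using hi) = (es.map src)[j]'(by simpa using hj) := by
      simpa using hij
    exact (hnd.getElem_inj_iff).mp this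
  intro hloop
  rcases lt_or_eq_of_le (Nat.succ_le_of_lt hi) with hi1 | hi1
  · have := hch i (by omega)
    have : src es[i] = src es[i+1] := by rw [hloop, this]
    have := hndlen hi (by omega) this
    omega
  · -- i = es.length - 1, e is the last element
    have hlaste : es.getLast hne = es[i] := by
      rw [List.getLast_eq_getElem]
      congr 1
      omega
    have hheade : es.head hne = es[0]'(by omega) := by
      rw [List.head_eq_getElem]
    have := hlast hne
    rw [hlaste, hheade] at this
    have : src es[i] = src (es[0]'(by omega)) := by rw [hloop, this]
    have := hndlen hi (by omega) this
    omega

lemma sum_neg {l : List ℝ} (hne : l ≠ []) (h : ∀ x ∈ l, x < 0) : l.sum < 0 := by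
  induction l with
  | nil => simp at hne
  | cons a t ih =>
    rcases eq_or_ne t [] with rfl | ht
    · simpa using h a (by simp)
    · have := ih ht (fun x hx => h x (by simp [hx]))
      have ha := h a (by simp)
      simp only [List.sum_cons]
      linarith

lemma map_add_sum {E : Type*} (f g : E → ℝ) (l : List E) :
    (l.map (fun e => f e + g e)).sum = (l.map f).sum + (l.map g).sum := by
  induction l with
  | nil => simp
  | cons a t ih => simp only [List.map_cons, List.sum_cons, ih]; ring

end aux

theorem stmt17 {V : Type*} [Fintype V] [DecidableEq V] (Adj : V → V → Prop)
    (hsymm : ∀ u v, Adj u v → Adj v u) (hcard : 2 < Fintype.card V)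
    -- the bidirected graph G of U has a Hamiltonian directed cycle
    (hham : ∃ es : List {p : V × V // Adj p.1 p.2},
      IsCycle (fun e => e.val.1) (fun e => e.val.2) es ∧
      (es.map (fun e => e.val.1)).toFinset = Finset.univ) :
    -- the pattern + on Hamiltonian cycles and − on all other cycles is not realizable
    ¬ ∃ w : {p : V × V // Adj p.1 p.2} → ℝ,
        ∀ es, IsCycle (fun e => e.val.1) (fun e => e.val.2) es →
          SignType.sign ((es.map w).sum) =
            (if (es.map (fun e => e.val.1)).toFinset = Finset.univ then 1 else -1) := by
  rintro ⟨w, hw⟩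
  obtain ⟨es, hc, hhu⟩ := hham
  let rev : {p : V × V // Adj p.1 p.2} → {p : V × V // Adj p.1 p.2} :=
    fun e => ⟨(e.val.2, e.val.1), hsymm _ _ e.prop⟩
  let src : {p : V × V // Adj p.1 p.2} → V := fun e => e.val.1
  let tgt : {p : V × V // Adj p.1 p.2} → V := fun e => e.val.2
  have hrs : ∀ e, src (rev e) = tgt e := fun e => rfl
  have hrt : ∀ e, tgt (rev e) = src e := fun e => rfl
  -- length of the Hamiltonian cycle
  have hlen : es.length = Fintype.card V := by
    have h1 := List.toFinset_card_of_nodup hc.2.2.2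
    rw [hhu, Finset.card_univ, List.length_map] at h1
    exact h1.symm
  have hlen2 : 2 ≤ es.length := by omega
  -- the forward Hamiltonian cycle has positive weight
  have h1 := hw es hc
  rw [if_pos hhu] at h1
  have hp1 : 0 < (es.map w).sum := by rwa [sign_eq_one_iff] at h1
  -- the reversed Hamiltonian cycle
  have hres : IsCycle src tgt (es.reverse.map rev) := rev_cycle rev hrs hrt hc
  have hresu : ((es.reverse.map rev).map src).toFinset = Finset.univ := by
    have hmm : (es.reverse.map rev).map src = (es.map tgt).reverse := by
      rw [List.map_map, ← List.map_reverse]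
      rfl
    rw [hmm, List.toFinset_reverse, List.toFinset_eq_of_perm _ _ (map_tgt_perm hc), hhu]
  have h2 := hw _ hres
  rw [if_pos hresu] at h2
  have hp2 : 0 < ((es.reverse.map rev).map w).sum := by rwa [sign_eq_one_iff] at h2
  have hsum2 : ((es.reverse.map rev).map w).sum = (es.map (fun e => w (rev e))).sum := by
    rw [List.map_map, List.map_reverse, List.sum_reverse]
    rfl
  rw [hsum2] at hp2
  -- 2-cycles are negative
  have h2cyc : ∀ e ∈ es, w e + w (rev e) < 0 := by
    intro e he
    have hloop : src e ≠ tgt e := no_loop hc hlen2 he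
    have hcyc2 : IsCycle src tgt [e, rev e] := by
      refine ⟨by simp, ?_, ?_, ?_⟩
      · simp only [List.Chain', List.isChain_cons_cons, List.isChain_singleton, and_true]; exact (hrs e).symm
      · intro h
        exact hrt e
      · simp only [List.map_cons, List.map_nil, hrs]
        simp [hloop]
    have h3 := hw _ hcyc2
    have hnotuniv : (([e, rev e].map src).toFinset : Finset V) ≠ Finset.univ := by
      intro hcon
      have : (([e, rev e].map src).toFinset : Finset V).card ≤ 2 := by
        simp only [List.map_cons, List.map_nil]
        refine le_trans (List.toFinset_card_le _) (by simp)
      rw [hcon, Finset.card_univ] at this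
      omega
    rw [if_neg hnotuniv] at h3
    have := sign_eq_neg_one_iff.mp h3
    simpa using this
  -- conclude
  have hsplit : (es.map (fun e => w e + w (rev e))).sum
      = (es.map w).sum + (es.map (fun e => w (rev e))).sum := map_add_sum w _ es
  have hneg : (es.map (fun e => w e + w (rev e))).sum < 0 := by
    refine sum_neg (by simpa using hc.1) ?_
    intro x hx
    obtain ⟨e, he, rfl⟩ := List.mem_map.mp hx
    exact h2cyc e he
  rw [hsplit] at hneg
  linarith
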